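/- Doctrinal adjunction, part 2: a monad morphism (u, φ) : (A, s) → (B, t) in a 2-category has a left adjoint in the 2-category Mnd(𝒞) of monads, monad morphisms, and monad 2-cells if and only if u has a left adjoint f in 𝒞 and the mate φ̂ : f t ⟹ s f of φ (using the unit and counit of f ⊣ u) is invertible. In that case the left adjoint is (f, φ̂⁻¹) and the unit and counit of f ⊣ u are monad 2-cells. -/
import Mathlib


open CategoryTheory CategoryTheory.Bicategory

namespace WoodStmt14

variable {B : Type*} [Bicategory B]

/-- Monad axioms for `(s, η, μ)` on an object of a bicategory. -/
def IsMonad {a : B} (s : a ⟶ a) (η : 𝟙 a ⟶ s) (μ : s ≫ s ⟶ s) : Prop :=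
  (η ▷ s) ≫ μ = (λ_ s).hom ∧
  (s ◁ η) ≫ μ = (ρ_ s).hom ∧
  (μ ▷ s) ≫ μ = (α_ s s s).hom ≫ (s ◁ μ) ≫ μ

/-- The monad morphism axioms for a 1-cell `g : (x, m) → (y, n)` of `Mnd(𝒞)` with 2-cell
`χ : g ≫ n ⟶ m ≫ g` (i.e. `χ : n g ⟹ g m`). -/
def IsMndMor {x y : B} (m : x ⟶ x) (ηm : 𝟙 x ⟶ m) (μm : m ≫ m ⟶ m)
    (n : y ⟶ y) (ηn : 𝟙 y ⟶ n) (μn : n ≫ n ⟶ n)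
    (g : x ⟶ y) (χ : g ≫ n ⟶ m ≫ g) : Prop :=
  (g ◁ ηn) ≫ χ = (ρ_ g).hom ≫ (λ_ g).inv ≫ (ηm ▷ g) ∧
  (g ◁ μn) ≫ χ =
    (α_ g n n).inv ≫ (χ ▷ n) ≫ (α_ m g n).hom ≫ (m ◁ χ) ≫ (α_ m m g).inv ≫ (μm ▷ g)

/-- The mate `φ̂ : f t ⟹ s f` of `φ : t u ⟹ u s` under an adjunction `f ⊣ u`. -/
def mate {a b : B} (s : a ⟶ a) (t : b ⟶ b) (u : a ⟶ b) (f : b ⟶ a)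
    (adj : Bicategory.Adjunction f u) (φ : u ≫ t ⟶ s ≫ u) : t ≫ f ⟶ f ≫ s :=
  (λ_ (t ≫ f)).inv ≫ (adj.unit ▷ (t ≫ f)) ≫ (α_ f u (t ≫ f)).hom ≫
    (f ◁ (α_ u t f).inv) ≫ (f ◁ (φ ▷ f)) ≫ (f ◁ (α_ s u f).hom) ≫
    (f ◁ (s ◁ adj.counit)) ≫ (f ◁ (ρ_ s).hom)

/-- The 2-cell of the composite morphism `(b,t) → (a,s) → (b,t)` in `Mnd(𝒞)`. -/
def compCell {a b : B} (s : a ⟶ a) (t : b ⟶ b) (u : a ⟶ b) (φ : u ≫ t ⟶ s ≫ u)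
    (f : b ⟶ a) (ψ : f ≫ s ⟶ t ≫ f) : (f ≫ u) ≫ t ⟶ t ≫ (f ≫ u) :=
  (α_ f u t).hom ≫ (f ◁ φ) ≫ (α_ f s u).inv ≫ (ψ ▷ u) ≫ (α_ t f u).hom

/-- The 2-cell of the composite morphism `(a,s) → (b,t) → (a,s)` in `Mnd(𝒞)`. -/
def compCell' {a b : B} (s : a ⟶ a) (t : b ⟶ b) (u : a ⟶ b) (φ : u ≫ t ⟶ s ≫ u)
    (f : b ⟶ a) (ψ : f ≫ s ⟶ t ≫ f) : (u ≫ f) ≫ s ⟶ s ≫ (u ≫ f) :=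
  (α_ u f s).hom ≫ (u ◁ ψ) ≫ (α_ u t f).inv ≫ (φ ▷ f) ≫ (α_ s u f).hom

/-- `(f, ψ)` together with an adjunction `f ⊣ u` whose unit and counit are 2-cells of
`Mnd(𝒞)` is a left adjoint for `(u, φ)` in `Mnd(𝒞)`. -/
def IsMndLeftAdjoint {a b : B} (s : a ⟶ a) (ηs : 𝟙 a ⟶ s) (μs : s ≫ s ⟶ s)
    (t : b ⟶ b) (ηt : 𝟙 b ⟶ t) (μt : t ≫ t ⟶ t)
    (u : a ⟶ b) (φ : u ≫ t ⟶ s ≫ u) (f : b ⟶ a) (ψ : f ≫ s ⟶ t ≫ f)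
    (adj : Bicategory.Adjunction f u) : Prop :=
  IsMndMor t ηt μt s ηs μs f ψ ∧
  -- the unit `β : 𝟙 b ⟶ f ≫ u` is a 2-cell of `Mnd(𝒞)`
  ((adj.unit ▷ t) ≫ compCell s t u φ f ψ =
    ((λ_ t).hom ≫ (ρ_ t).inv) ≫ (t ◁ adj.unit)) ∧
  -- the counit `α : u ≫ f ⟶ 𝟙 a` is a 2-cell of `Mnd(𝒞)`
  ((adj.counit ▷ s) ≫ ((λ_ s).hom ≫ (ρ_ s).inv) =
    compCell' s t u φ f ψ ≫ (s ◁ adj.counit))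

section Aux

variable {a b : B} (s : a ⟶ a) (t : b ⟶ b) (u : a ⟶ b) (φ : u ≫ t ⟶ s ≫ u)
    (f : b ⟶ a) (adj : Bicategory.Adjunction f u)

theorem mate_eq : mate s t u f adj φ =
    𝟙 (t ≫ f) ⊗≫ adj.unit ▷ (t ≫ f) ⊗≫ f ◁ (φ ▷ f) ⊗≫ f ◁ (s ◁ adj.counit) ⊗≫ 𝟙 (f ≫ s) := by
  simp only [mate]
  bicategory

theorem K2 :
    𝟙 t ⊗≫ t ◁ adj.unit ⊗≫ (mate s t u f adj φ) ▷ u ⊗≫ 𝟙 (f ≫ s ≫ u) =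
    𝟙 t ⊗≫ adj.unit ▷ t ⊗≫ f ◁ φ ⊗≫ 𝟙 (f ≫ s ≫ u) := by
  calc 𝟙 t ⊗≫ t ◁ adj.unit ⊗≫ (mate s t u f adj φ) ▷ u ⊗≫ 𝟙 (f ≫ s ≫ u)
      = 𝟙 t ⊗≫ (𝟙 b ◁ (t ◁ adj.unit) ≫ adj.unit ▷ (t ≫ f ≫ u)) ⊗≫
          f ◁ (φ ▷ (f ≫ u)) ⊗≫ f ◁ (s ◁ (adj.counit ▷ u)) ⊗≫ 𝟙 (f ≫ s ≫ u) := by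
        rw [mate_eq]; bicategory
    _ = 𝟙 t ⊗≫ (adj.unit ▷ (t ≫ 𝟙 b) ≫ (f ≫ u) ◁ (t ◁ adj.unit)) ⊗≫
          f ◁ (φ ▷ (f ≫ u)) ⊗≫ f ◁ (s ◁ (adj.counit ▷ u)) ⊗≫ 𝟙 (f ≫ s ≫ u) := by
        rw [whisker_exchange]
    _ = 𝟙 t ⊗≫ adj.unit ▷ t ⊗≫ f ◁ ((u ≫ t) ◁ adj.unit ≫ φ ▷ (f ≫ u)) ⊗≫
          f ◁ (s ◁ (adj.counit ▷ u)) ⊗≫ 𝟙 (f ≫ s ≫ u) := by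
        bicategory
    _ = 𝟙 t ⊗≫ adj.unit ▷ t ⊗≫ f ◁ (φ ▷ 𝟙 b ≫ (s ≫ u) ◁ adj.unit) ⊗≫
          f ◁ (s ◁ (adj.counit ▷ u)) ⊗≫ 𝟙 (f ≫ s ≫ u) := by
        rw [whisker_exchange]
    _ = 𝟙 t ⊗≫ adj.unit ▷ t ⊗≫ f ◁ φ ⊗≫
          f ◁ (s ◁ (u ◁ adj.unit ⊗≫ adj.counit ▷ u)) ⊗≫ 𝟙 (f ≫ s ≫ u) := by
        bicategory
    _ = 𝟙 t ⊗≫ adj.unit ▷ t ⊗≫ f ◁ φ ⊗≫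
          f ◁ (s ◁ ((ρ_ u).hom ≫ (λ_ u).inv)) ⊗≫ 𝟙 (f ≫ s ≫ u) := by
        rw [show u ◁ adj.unit ⊗≫ adj.counit ▷ u = (ρ_ u).hom ≫ (λ_ u).inv from adj.right_triangle]
    _ = 𝟙 t ⊗≫ adj.unit ▷ t ⊗≫ f ◁ φ ⊗≫ 𝟙 (f ≫ s ≫ u) := by
        bicategory

theorem K3 :
    u ◁ (mate s t u f adj φ) ⊗≫ adj.counit ▷ s ⊗≫ 𝟙 s =
    𝟙 (u ≫ t ≫ f) ⊗≫ φ ▷ f ⊗≫ s ◁ adj.counit ⊗≫ 𝟙 s := by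
  calc u ◁ (mate s t u f adj φ) ⊗≫ adj.counit ▷ s ⊗≫ 𝟙 s
      = 𝟙 (u ≫ t ≫ f) ⊗≫ u ◁ (adj.unit ▷ (t ≫ f)) ⊗≫ u ◁ (f ◁ (φ ▷ f)) ⊗≫
          ((u ≫ f) ◁ (s ◁ adj.counit) ≫ adj.counit ▷ (s ≫ 𝟙 a)) ⊗≫ 𝟙 s := by
        rw [mate_eq]; bicategory
    _ = 𝟙 (u ≫ t ≫ f) ⊗≫ u ◁ (adj.unit ▷ (t ≫ f)) ⊗≫ u ◁ (f ◁ (φ ▷ f)) ⊗≫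
          (adj.counit ▷ (s ≫ u ≫ f) ≫ 𝟙 a ◁ (s ◁ adj.counit)) ⊗≫ 𝟙 s := by
        rw [whisker_exchange]
    _ = 𝟙 (u ≫ t ≫ f) ⊗≫ u ◁ (adj.unit ▷ (t ≫ f)) ⊗≫
          ((u ≫ f) ◁ (φ ▷ f) ≫ adj.counit ▷ ((s ≫ u) ≫ f)) ⊗≫ s ◁ adj.counit ⊗≫ 𝟙 s := by
        bicategory
    _ = 𝟙 (u ≫ t ≫ f) ⊗≫ u ◁ (adj.unit ▷ (t ≫ f)) ⊗≫
          (adj.counit ▷ ((u ≫ t) ≫ f) ≫ 𝟙 a ◁ (φ ▷ f)) ⊗≫ s ◁ adj.counit ⊗≫ 𝟙 s := by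
        rw [whisker_exchange]
    _ = 𝟙 (u ≫ t ≫ f) ⊗≫ (u ◁ adj.unit ⊗≫ adj.counit ▷ u) ▷ (t ≫ f) ⊗≫
          φ ▷ f ⊗≫ s ◁ adj.counit ⊗≫ 𝟙 s := by
        bicategory
    _ = 𝟙 (u ≫ t ≫ f) ⊗≫ ((ρ_ u).hom ≫ (λ_ u).inv) ▷ (t ≫ f) ⊗≫
          φ ▷ f ⊗≫ s ◁ adj.counit ⊗≫ 𝟙 s := by
        rw [show u ◁ adj.unit ⊗≫ adj.counit ▷ u = (ρ_ u).hom ≫ (λ_ u).inv from adj.right_triangle]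
    _ = 𝟙 (u ≫ t ≫ f) ⊗≫ φ ▷ f ⊗≫ s ◁ adj.counit ⊗≫ 𝟙 s := by
        bicategory

variable (ηs : 𝟙 a ⟶ s) (μs : s ≫ s ⟶ s) (ηt : 𝟙 b ⟶ t) (μt : t ≫ t ⟶ t)

theorem K1unit (hφ : IsMndMor s ηs μs t ηt μt u φ) :
    f ◁ ηs = (ρ_ f).hom ≫ (λ_ f).inv ≫ (ηt ▷ f) ≫ mate s t u f adj φ := by
  symm
  calc (ρ_ f).hom ≫ (λ_ f).inv ≫ (ηt ▷ f) ≫ mate s t u f adj φ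
      = 𝟙 (f ≫ 𝟙 a) ⊗≫ (𝟙 b ◁ (ηt ▷ f) ≫ adj.unit ▷ (t ≫ f)) ⊗≫
          f ◁ (φ ▷ f) ⊗≫ f ◁ (s ◁ adj.counit) ⊗≫ 𝟙 (f ≫ s) := by
        rw [mate_eq]; bicategory
    _ = 𝟙 (f ≫ 𝟙 a) ⊗≫ (adj.unit ▷ (𝟙 b ≫ f) ≫ (f ≫ u) ◁ (ηt ▷ f)) ⊗≫
          f ◁ (φ ▷ f) ⊗≫ f ◁ (s ◁ adj.counit) ⊗≫ 𝟙 (f ≫ s) := by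
        rw [whisker_exchange]
    _ = 𝟙 (f ≫ 𝟙 a) ⊗≫ adj.unit ▷ f ⊗≫ f ◁ (((u ◁ ηt) ≫ φ) ▷ f) ⊗≫
          f ◁ (s ◁ adj.counit) ⊗≫ 𝟙 (f ≫ s) := by
        bicategory
    _ = 𝟙 (f ≫ 𝟙 a) ⊗≫ adj.unit ▷ f ⊗≫
          f ◁ (((ρ_ u).hom ≫ (λ_ u).inv ≫ (ηs ▷ u)) ▷ f) ⊗≫
          f ◁ (s ◁ adj.counit) ⊗≫ 𝟙 (f ≫ s) := by
        rw [hφ.1]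
    _ = 𝟙 (f ≫ 𝟙 a) ⊗≫ adj.unit ▷ f ⊗≫
          f ◁ (ηs ▷ (u ≫ f) ≫ s ◁ adj.counit) ⊗≫ 𝟙 (f ≫ s) := by
        bicategory
    _ = 𝟙 (f ≫ 𝟙 a) ⊗≫ adj.unit ▷ f ⊗≫
          f ◁ (𝟙 a ◁ adj.counit ≫ ηs ▷ 𝟙 a) ⊗≫ 𝟙 (f ≫ s) := by
        rw [← whisker_exchange]
    _ = 𝟙 (f ≫ 𝟙 a) ⊗≫ (adj.unit ▷ f ⊗≫ f ◁ adj.counit) ⊗≫ f ◁ ηs ⊗≫ 𝟙 (f ≫ s) := by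
        bicategory
    _ = 𝟙 (f ≫ 𝟙 a) ⊗≫ ((λ_ f).hom ≫ (ρ_ f).inv) ⊗≫ f ◁ ηs ⊗≫ 𝟙 (f ≫ s) := by
        rw [show adj.unit ▷ f ⊗≫ f ◁ adj.counit = (λ_ f).hom ≫ (ρ_ f).inv from adj.left_triangle]
    _ = f ◁ ηs := by bicategory

theorem Kmul (hφ : IsMndMor s ηs μs t ηt μt u φ) :
    𝟙 ((t ≫ t) ≫ f) ⊗≫ μt ▷ f ⊗≫ mate s t u f adj φ ⊗≫ 𝟙 (f ≫ s) =
    𝟙 ((t ≫ t) ≫ f) ⊗≫ t ◁ mate s t u f adj φ ⊗≫ (mate s t u f adj φ) ▷ s ⊗≫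
      f ◁ μs ⊗≫ 𝟙 (f ≫ s) := by
  have L : 𝟙 ((t ≫ t) ≫ f) ⊗≫ μt ▷ f ⊗≫ mate s t u f adj φ ⊗≫ 𝟙 (f ≫ s) =
      𝟙 ((t ≫ t) ≫ f) ⊗≫ adj.unit ▷ (t ≫ t ≫ f) ⊗≫ f ◁ (φ ▷ (t ≫ f)) ⊗≫
        f ◁ (s ◁ (φ ▷ f)) ⊗≫ f ◁ (s ◁ (s ◁ adj.counit)) ⊗≫ f ◁ μs ⊗≫ 𝟙 (f ≫ s) := by
    calc 𝟙 ((t ≫ t) ≫ f) ⊗≫ μt ▷ f ⊗≫ mate s t u f adj φ ⊗≫ 𝟙 (f ≫ s)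
        = 𝟙 ((t ≫ t) ≫ f) ⊗≫ (𝟙 b ◁ (μt ▷ f) ≫ adj.unit ▷ (t ≫ f)) ⊗≫
            f ◁ (φ ▷ f) ⊗≫ f ◁ (s ◁ adj.counit) ⊗≫ 𝟙 (f ≫ s) := by
          rw [mate_eq]; bicategory
      _ = 𝟙 ((t ≫ t) ≫ f) ⊗≫ (adj.unit ▷ ((t ≫ t) ≫ f) ≫ (f ≫ u) ◁ (μt ▷ f)) ⊗≫
            f ◁ (φ ▷ f) ⊗≫ f ◁ (s ◁ adj.counit) ⊗≫ 𝟙 (f ≫ s) := by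
          rw [whisker_exchange]
      _ = 𝟙 ((t ≫ t) ≫ f) ⊗≫ adj.unit ▷ (t ≫ t ≫ f) ⊗≫
            f ◁ (((u ◁ μt) ≫ φ) ▷ f) ⊗≫ f ◁ (s ◁ adj.counit) ⊗≫ 𝟙 (f ≫ s) := by
          bicategory
      _ = 𝟙 ((t ≫ t) ≫ f) ⊗≫ adj.unit ▷ (t ≫ t ≫ f) ⊗≫
            f ◁ (((α_ u t t).inv ≫ (φ ▷ t) ≫ (α_ s u t).hom ≫ (s ◁ φ) ≫ (α_ s s u).inv ≫
              (μs ▷ u)) ▷ f) ⊗≫ f ◁ (s ◁ adj.counit) ⊗≫ 𝟙 (f ≫ s) := by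
          rw [hφ.2]
      _ = 𝟙 ((t ≫ t) ≫ f) ⊗≫ adj.unit ▷ (t ≫ t ≫ f) ⊗≫ f ◁ (φ ▷ (t ≫ f)) ⊗≫
            f ◁ (s ◁ (φ ▷ f)) ⊗≫ f ◁ (μs ▷ (u ≫ f) ≫ s ◁ adj.counit) ⊗≫ 𝟙 (f ≫ s) := by
          bicategory
      _ = 𝟙 ((t ≫ t) ≫ f) ⊗≫ adj.unit ▷ (t ≫ t ≫ f) ⊗≫ f ◁ (φ ▷ (t ≫ f)) ⊗≫
            f ◁ (s ◁ (φ ▷ f)) ⊗≫ f ◁ ((s ≫ s) ◁ adj.counit ≫ μs ▷ 𝟙 a) ⊗≫ 𝟙 (f ≫ s) := by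
          rw [← whisker_exchange]
      _ = _ := by bicategory
  have R : 𝟙 ((t ≫ t) ≫ f) ⊗≫ t ◁ mate s t u f adj φ ⊗≫ (mate s t u f adj φ) ▷ s ⊗≫
        f ◁ μs ⊗≫ 𝟙 (f ≫ s) =
      𝟙 ((t ≫ t) ≫ f) ⊗≫ adj.unit ▷ (t ≫ t ≫ f) ⊗≫ f ◁ (φ ▷ (t ≫ f)) ⊗≫
        f ◁ (s ◁ (φ ▷ f)) ⊗≫ f ◁ (s ◁ (s ◁ adj.counit)) ⊗≫ f ◁ μs ⊗≫ 𝟙 (f ≫ s) := by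
    calc 𝟙 ((t ≫ t) ≫ f) ⊗≫ t ◁ mate s t u f adj φ ⊗≫ (mate s t u f adj φ) ▷ s ⊗≫
          f ◁ μs ⊗≫ 𝟙 (f ≫ s)
        = 𝟙 ((t ≫ t) ≫ f) ⊗≫ (𝟙 b ◁ (t ◁ mate s t u f adj φ) ≫ adj.unit ▷ (t ≫ f ≫ s)) ⊗≫
            f ◁ (φ ▷ (f ≫ s)) ⊗≫ f ◁ (s ◁ (adj.counit ▷ s)) ⊗≫ f ◁ μs ⊗≫ 𝟙 (f ≫ s) := by
          nth_rewrite 2 [mate_eq]; bicategory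
      _ = 𝟙 ((t ≫ t) ≫ f) ⊗≫ (adj.unit ▷ (t ≫ t ≫ f) ≫ (f ≫ u) ◁ (t ◁ mate s t u f adj φ)) ⊗≫
            f ◁ (φ ▷ (f ≫ s)) ⊗≫ f ◁ (s ◁ (adj.counit ▷ s)) ⊗≫ f ◁ μs ⊗≫ 𝟙 (f ≫ s) := by
          rw [whisker_exchange]
      _ = 𝟙 ((t ≫ t) ≫ f) ⊗≫ adj.unit ▷ (t ≫ t ≫ f) ⊗≫
            f ◁ ((u ≫ t) ◁ mate s t u f adj φ ≫ φ ▷ (f ≫ s)) ⊗≫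
            f ◁ (s ◁ (adj.counit ▷ s)) ⊗≫ f ◁ μs ⊗≫ 𝟙 (f ≫ s) := by
          bicategory
      _ = 𝟙 ((t ≫ t) ≫ f) ⊗≫ adj.unit ▷ (t ≫ t ≫ f) ⊗≫
            f ◁ (φ ▷ (t ≫ f) ≫ (s ≫ u) ◁ mate s t u f adj φ) ⊗≫
            f ◁ (s ◁ (adj.counit ▷ s)) ⊗≫ f ◁ μs ⊗≫ 𝟙 (f ≫ s) := by
          rw [whisker_exchange]
      _ = 𝟙 ((t ≫ t) ≫ f) ⊗≫ adj.unit ▷ (t ≫ t ≫ f) ⊗≫ f ◁ (φ ▷ (t ≫ f)) ⊗≫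
            f ◁ (s ◁ (u ◁ mate s t u f adj φ ⊗≫ adj.counit ▷ s ⊗≫ 𝟙 s)) ⊗≫
            f ◁ μs ⊗≫ 𝟙 (f ≫ s) := by
          bicategory
      _ = 𝟙 ((t ≫ t) ≫ f) ⊗≫ adj.unit ▷ (t ≫ t ≫ f) ⊗≫ f ◁ (φ ▷ (t ≫ f)) ⊗≫
            f ◁ (s ◁ (𝟙 (u ≫ t ≫ f) ⊗≫ φ ▷ f ⊗≫ s ◁ adj.counit ⊗≫ 𝟙 s)) ⊗≫
            f ◁ μs ⊗≫ 𝟙 (f ≫ s) := by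
          rw [K3]
      _ = _ := by bicategory
  rw [L, R]
section Psi
variable (ψ : f ≫ s ⟶ t ≫ f)

theorem cond2 (hψ1 : mate s t u f adj φ ≫ ψ = 𝟙 (t ≫ f)) :
    (adj.unit ▷ t) ≫ compCell s t u φ f ψ =
      ((λ_ t).hom ≫ (ρ_ t).inv) ≫ (t ◁ adj.unit) := by
  calc (adj.unit ▷ t) ≫ compCell s t u φ f ψ
      = 𝟙 (𝟙 b ≫ t) ⊗≫ (𝟙 t ⊗≫ adj.unit ▷ t ⊗≫ f ◁ φ ⊗≫ 𝟙 (f ≫ s ≫ u)) ≫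
          (α_ f s u).inv ≫ (ψ ▷ u) ≫ (α_ t f u).hom := by
        simp only [compCell]; bicategory
    _ = 𝟙 (𝟙 b ≫ t) ⊗≫ (𝟙 t ⊗≫ t ◁ adj.unit ⊗≫ (mate s t u f adj φ) ▷ u ⊗≫ 𝟙 (f ≫ s ≫ u)) ≫
          (α_ f s u).inv ≫ (ψ ▷ u) ≫ (α_ t f u).hom := by
        rw [← K2]
    _ = 𝟙 (𝟙 b ≫ t) ⊗≫ t ◁ adj.unit ⊗≫ ((mate s t u f adj φ ≫ ψ) ▷ u) ⊗≫ 𝟙 (t ≫ f ≫ u) := by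
        bicategory
    _ = ((λ_ t).hom ≫ (ρ_ t).inv) ≫ (t ◁ adj.unit) := by
        rw [hψ1]; bicategory

theorem cond3 (hψ2 : ψ ≫ mate s t u f adj φ = 𝟙 (f ≫ s)) :
    (adj.counit ▷ s) ≫ ((λ_ s).hom ≫ (ρ_ s).inv) =
      compCell' s t u φ f ψ ≫ (s ◁ adj.counit) := by
  symm
  calc compCell' s t u φ f ψ ≫ (s ◁ adj.counit)
      = 𝟙 ((u ≫ f) ≫ s) ⊗≫ u ◁ ψ ⊗≫
          (𝟙 (u ≫ t ≫ f) ⊗≫ φ ▷ f ⊗≫ s ◁ adj.counit ⊗≫ 𝟙 s) ⊗≫ 𝟙 (s ≫ 𝟙 a) := by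
        simp only [compCell']; bicategory
    _ = 𝟙 ((u ≫ f) ≫ s) ⊗≫ u ◁ ψ ⊗≫
          (u ◁ mate s t u f adj φ ⊗≫ adj.counit ▷ s ⊗≫ 𝟙 s) ⊗≫ 𝟙 (s ≫ 𝟙 a) := by
        rw [← K3]
    _ = 𝟙 ((u ≫ f) ≫ s) ⊗≫ u ◁ (ψ ≫ mate s t u f adj φ) ⊗≫ adj.counit ▷ s ⊗≫ 𝟙 (s ≫ 𝟙 a) := by
        bicategory
    _ = (adj.counit ▷ s) ≫ ((λ_ s).hom ≫ (ρ_ s).inv) := by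
        rw [hψ2]; bicategory

theorem mndMorPsi (hφ : IsMndMor s ηs μs t ηt μt u φ)
    (hψ1 : mate s t u f adj φ ≫ ψ = 𝟙 (t ≫ f))
    (hψ2 : ψ ≫ mate s t u f adj φ = 𝟙 (f ≫ s)) :
    IsMndMor t ηt μt s ηs μs f ψ := by
  constructor
  · rw [K1unit s t u φ f adj ηs μs ηt μt hφ]
    simp only [Category.assoc, hψ1, Category.comp_id]
  · have Kmul' : (μt ▷ f) ≫ mate s t u f adj φ =
        (α_ t t f).hom ≫ (t ◁ mate s t u f adj φ) ≫ (α_ t f s).inv ≫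
          ((mate s t u f adj φ) ▷ s) ≫ (α_ f s s).hom ≫ (f ◁ μs) := by
      calc (μt ▷ f) ≫ mate s t u f adj φ
          = 𝟙 ((t ≫ t) ≫ f) ⊗≫ μt ▷ f ⊗≫ mate s t u f adj φ ⊗≫ 𝟙 (f ≫ s) := by bicategory
        _ = 𝟙 ((t ≫ t) ≫ f) ⊗≫ t ◁ mate s t u f adj φ ⊗≫ (mate s t u f adj φ) ▷ s ⊗≫
              f ◁ μs ⊗≫ 𝟙 (f ≫ s) := Kmul s t u φ f adj ηs μs ηt μt hφ
        _ = _ := by bicategory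
    have : IsIso (mate s t u f adj φ) := ⟨ψ, hψ1, hψ2⟩
    rw [← cancel_mono (mate s t u f adj φ)]
    simp only [Category.assoc]
    rw [hψ2, Category.comp_id, Kmul']
    simp only [Iso.hom_inv_id_assoc, Iso.inv_hom_id_assoc]
    rw [← Bicategory.whiskerLeft_comp_assoc, hψ2, Bicategory.whiskerLeft_id, Category.id_comp,
      Iso.hom_inv_id_assoc, ← Bicategory.comp_whiskerRight_assoc, hψ2,
      Bicategory.id_whiskerRight, Category.id_comp, Iso.inv_hom_id_assoc]
end Psi

section Fwd
variable (ψ : f ≫ s ⟶ t ≫ f)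

theorem inv1 (h2 : (adj.unit ▷ t) ≫ compCell s t u φ f ψ =
    ((λ_ t).hom ≫ (ρ_ t).inv) ≫ (t ◁ adj.unit)) :
    mate s t u f adj φ ≫ ψ = 𝟙 (t ≫ f) := by
  have h2' : 𝟙 (𝟙 b ≫ t) ⊗≫ adj.unit ▷ t ⊗≫ f ◁ φ ⊗≫ ψ ▷ u ⊗≫ 𝟙 (t ≫ f ≫ u) =
      ((λ_ t).hom ≫ (ρ_ t).inv) ≫ (t ◁ adj.unit) := by
    calc 𝟙 (𝟙 b ≫ t) ⊗≫ adj.unit ▷ t ⊗≫ f ◁ φ ⊗≫ ψ ▷ u ⊗≫ 𝟙 (t ≫ f ≫ u)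
        = (adj.unit ▷ t) ≫ compCell s t u φ f ψ := by
          simp only [compCell]; bicategory
      _ = _ := h2
  calc mate s t u f adj φ ≫ ψ
      = 𝟙 (t ≫ f) ⊗≫ adj.unit ▷ (t ≫ f) ⊗≫ f ◁ (φ ▷ f) ⊗≫
          ((f ≫ s) ◁ adj.counit ≫ ψ ▷ 𝟙 a) ⊗≫ 𝟙 (t ≫ f) := by
        rw [mate_eq]; bicategory
    _ = 𝟙 (t ≫ f) ⊗≫ adj.unit ▷ (t ≫ f) ⊗≫ f ◁ (φ ▷ f) ⊗≫
          (ψ ▷ (u ≫ f) ≫ (t ≫ f) ◁ adj.counit) ⊗≫ 𝟙 (t ≫ f) := by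
        rw [whisker_exchange]
    _ = 𝟙 (t ≫ f) ⊗≫
          (𝟙 (𝟙 b ≫ t) ⊗≫ adj.unit ▷ t ⊗≫ f ◁ φ ⊗≫ ψ ▷ u ⊗≫ 𝟙 (t ≫ f ≫ u)) ▷ f ⊗≫
          (t ≫ f) ◁ adj.counit ⊗≫ 𝟙 (t ≫ f) := by
        bicategory
    _ = 𝟙 (t ≫ f) ⊗≫ (((λ_ t).hom ≫ (ρ_ t).inv) ≫ (t ◁ adj.unit)) ▷ f ⊗≫
          (t ≫ f) ◁ adj.counit ⊗≫ 𝟙 (t ≫ f) := by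
        rw [h2']
    _ = 𝟙 (t ≫ f) ⊗≫ t ◁ (adj.unit ▷ f ⊗≫ f ◁ adj.counit) ⊗≫ 𝟙 (t ≫ f) := by
        bicategory
    _ = 𝟙 (t ≫ f) ⊗≫ t ◁ ((λ_ f).hom ≫ (ρ_ f).inv) ⊗≫ 𝟙 (t ≫ f) := by
        rw [show adj.unit ▷ f ⊗≫ f ◁ adj.counit = (λ_ f).hom ≫ (ρ_ f).inv from adj.left_triangle]
    _ = 𝟙 (t ≫ f) := by bicategory

theorem inv2 (h3 : (adj.counit ▷ s) ≫ ((λ_ s).hom ≫ (ρ_ s).inv) =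
    compCell' s t u φ f ψ ≫ (s ◁ adj.counit)) :
    ψ ≫ mate s t u f adj φ = 𝟙 (f ≫ s) := by
  have h3' : 𝟙 ((u ≫ f) ≫ s) ⊗≫ u ◁ ψ ⊗≫ φ ▷ f ⊗≫ s ◁ adj.counit ⊗≫ 𝟙 (s ≫ 𝟙 a) =
      (adj.counit ▷ s) ≫ ((λ_ s).hom ≫ (ρ_ s).inv) := by
    calc 𝟙 ((u ≫ f) ≫ s) ⊗≫ u ◁ ψ ⊗≫ φ ▷ f ⊗≫ s ◁ adj.counit ⊗≫ 𝟙 (s ≫ 𝟙 a)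
        = compCell' s t u φ f ψ ≫ (s ◁ adj.counit) := by
          simp only [compCell']; bicategory
      _ = _ := h3.symm
  calc ψ ≫ mate s t u f adj φ
      = 𝟙 (f ≫ s) ⊗≫ (𝟙 b ◁ ψ ≫ adj.unit ▷ (t ≫ f)) ⊗≫ f ◁ (φ ▷ f) ⊗≫
          f ◁ (s ◁ adj.counit) ⊗≫ 𝟙 (f ≫ s) := by
        rw [mate_eq]; bicategory
    _ = 𝟙 (f ≫ s) ⊗≫ (adj.unit ▷ (f ≫ s) ≫ (f ≫ u) ◁ ψ) ⊗≫ f ◁ (φ ▷ f) ⊗≫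
          f ◁ (s ◁ adj.counit) ⊗≫ 𝟙 (f ≫ s) := by
        rw [whisker_exchange]
    _ = 𝟙 (f ≫ s) ⊗≫ adj.unit ▷ (f ≫ s) ⊗≫
          f ◁ (𝟙 ((u ≫ f) ≫ s) ⊗≫ u ◁ ψ ⊗≫ φ ▷ f ⊗≫ s ◁ adj.counit ⊗≫ 𝟙 (s ≫ 𝟙 a)) ⊗≫
          𝟙 (f ≫ s) := by
        bicategory
    _ = 𝟙 (f ≫ s) ⊗≫ adj.unit ▷ (f ≫ s) ⊗≫
          f ◁ ((adj.counit ▷ s) ≫ ((λ_ s).hom ≫ (ρ_ s).inv)) ⊗≫ 𝟙 (f ≫ s) := by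
        rw [h3']
    _ = 𝟙 (f ≫ s) ⊗≫ (adj.unit ▷ f ⊗≫ f ◁ adj.counit) ▷ s ⊗≫ 𝟙 (f ≫ s) := by
        bicategory
    _ = 𝟙 (f ≫ s) ⊗≫ ((λ_ f).hom ≫ (ρ_ f).inv) ▷ s ⊗≫ 𝟙 (f ≫ s) := by
        rw [show adj.unit ▷ f ⊗≫ f ◁ adj.counit = (λ_ f).hom ≫ (ρ_ f).inv from adj.left_triangle]
    _ = 𝟙 (f ≫ s) := by bicategory
end Fwd

end Aux

/-- (Doctrinal adjunction, part 2.) A monad morphism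
`(u, φ) : (a, s) → (b, t)` has a left adjoint in `Mnd(𝒞)` if and only if `u` has a left
adjoint `f` in `𝒞` and the mate `φ̂ : f t ⟹ s f` of `φ` is invertible; in that case the
left adjoint is `(f, φ̂⁻¹)`, whose structure 2-cell is a monad-morphism structure, and the
unit and counit of `f ⊣ u` are 2-cells of `Mnd(𝒞)`. -/
theorem doctrinal_adjunction_part2 {a b : B}
    (s : a ⟶ a) (ηs : 𝟙 a ⟶ s) (μs : s ≫ s ⟶ s)
    (t : b ⟶ b) (ηt : 𝟙 b ⟶ t) (μt : t ≫ t ⟶ t)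
    (u : a ⟶ b) (φ : u ≫ t ⟶ s ≫ u)
    (hs : IsMonad s ηs μs) (ht : IsMonad t ηt μt)
    (hφ : IsMndMor s ηs μs t ηt μt u φ) :
    ((∃ (f : b ⟶ a) (ψ : f ≫ s ⟶ t ≫ f) (adj : Bicategory.Adjunction f u),
        IsMndLeftAdjoint s ηs μs t ηt μt u φ f ψ adj) ↔
      (∃ (f : b ⟶ a) (adj : Bicategory.Adjunction f u) (ψ : f ≫ s ⟶ t ≫ f),
        mate s t u f adj φ ≫ ψ = 𝟙 (t ≫ f) ∧ ψ ≫ mate s t u f adj φ = 𝟙 (f ≫ s))) ∧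
    (∀ (f : b ⟶ a) (adj : Bicategory.Adjunction f u) (ψ : f ≫ s ⟶ t ≫ f),
      mate s t u f adj φ ≫ ψ = 𝟙 (t ≫ f) → ψ ≫ mate s t u f adj φ = 𝟙 (f ≫ s) →
      IsMndLeftAdjoint s ηs μs t ηt μt u φ f ψ adj) := by
  refine ⟨⟨?_, ?_⟩, ?_⟩
  · rintro ⟨f, ψ, adj, h⟩
    exact ⟨f, adj, ψ, inv1 s t u φ f adj ψ h.2.1, inv2 s t u φ f adj ψ h.2.2⟩
  · rintro ⟨f, adj, ψ, h1, h2⟩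
    exact ⟨f, ψ, adj, mndMorPsi s t u φ f adj ηs μs ηt μt ψ hφ h1 h2,
      cond2 s t u φ f adj ψ h1, cond3 s t u φ f adj ψ h2⟩
  · intro f adj ψ h1 h2
    exact ⟨mndMorPsi s t u φ f adj ηs μs ηt μt ψ hφ h1 h2,
      cond2 s t u φ f adj ψ h1, cond3 s t u φ f adj ψ h2⟩

end WoodStmt14
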